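/- Let (X,d) be a metric space and {x_n}_{n≥0} a sequence in X such that d(x_{p+1}, x_{q+1}) ≤ d(x_p, x_q) for all indices p, q. Then the following three statements are equivalent: (i) for any two subsequences {x_{p_n}} and {x_{q_n}} with x_{p_n} ≠ x_{q_n} for all n, if lim_{n→∞} d(x_{p_n+1}, x_{q_n+1}) / d(x_{p_n}, x_{q_n}) = 1 then d(x_{p_n}, x_{q_n}) → 0; (ii) for every ε > 0 and any two subsequences {x_{p_n}} and {x_{q_n}}, if limsup_{n→∞} d(x_{p_n}, x_{q_n}) ≤ ε then limsup_{n→∞} d(x_{p_n+1}, x_{q_n+1}) < ε; (iii) for every ε > 0 there exist δ > 0, η ∈ (0, ε), and an index N such that for all p, q ≥ N, d(x_p, x_q) < ε + δ implies d(x_{p+1}, x_{q+1}) ≤ η. -/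

import Mathlib

open Filter

namespace Stmt12Aux

variable {X : Type*} [MetricSpace X] {x : ℕ → X}

/-- Condition (iii). -/
def PropC (x : ℕ → X) : Prop :=
  ∀ ε : ℝ, 0 < ε → ∃ δ : ℝ, 0 < δ ∧ ∃ η : ℝ, 0 < η ∧ η < ε ∧ ∃ N : ℕ,
    ∀ p q : ℕ, N ≤ p → N ≤ q → dist (x p) (x q) < ε + δ → dist (x (p + 1)) (x (q + 1)) ≤ η

/-- Condition (ii). -/
def PropB (x : ℕ → X) : Prop :=
  ∀ ε : ℝ, 0 < ε → ∀ p q : ℕ → ℕ, StrictMono p → StrictMono q →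
    limsup (fun n => dist (x (p n)) (x (q n))) atTop ≤ ε →
    limsup (fun n => dist (x (p n + 1)) (x (q n + 1))) atTop < ε

/-- Condition (i). -/
def PropA (x : ℕ → X) : Prop :=
  ∀ p q : ℕ → ℕ, StrictMono p → StrictMono q → (∀ n, x (p n) ≠ x (q n)) →
    Tendsto (fun n => dist (x (p n + 1)) (x (q n + 1)) / dist (x (p n)) (x (q n)))
      atTop (nhds 1) →
    Tendsto (fun n => dist (x (p n)) (x (q n))) atTop (nhds 0)

theorem hshift (hmono : ∀ p q : ℕ, dist (x (p + 1)) (x (q + 1)) ≤ dist (x p) (x q)) :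
    ∀ (k p q : ℕ), dist (x (p + k)) (x (q + k)) ≤ dist (x p) (x q) := by
  intro k
  induction k with
  | zero => intro p q; simp
  | succ n ih =>
    intro p q
    have : dist (x (p + (n + 1))) (x (q + (n + 1))) ≤ dist (x (p + n)) (x (q + n)) :=
      hmono (p + n) (q + n)
    exact this.trans (ih p q)

/-- gap bound: every consecutive gap is at most the first one. -/
theorem gap_le (hmono : ∀ p q : ℕ, dist (x (p + 1)) (x (q + 1)) ≤ dist (x p) (x q)) (j : ℕ) :
    dist (x (j + 1)) (x j) ≤ dist (x 1) (x 0) := by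
  have := hshift hmono j 1 0
  simpa [Nat.add_comm] using this

theorem limsup_eq_zero_of_not_bounded {f : ℕ → ℝ}
    (h : ¬ IsBoundedUnder (· ≤ ·) atTop f) : limsup f atTop = 0 := by
  rw [Filter.limsup_eq]
  convert Real.sInf_empty using 2
  · rfl
  rw [Set.eq_empty_iff_forall_notMem]
  intro a ha
  exact h ⟨a, by simpa [Filter.eventually_map] using ha⟩

/-- If the distances are unbounded then the shifted distances are unbounded, so the
limsup of the shifted distances is the junk value 0. -/
theorem limsup_shift_junk (hmono : ∀ p q : ℕ, dist (x (p + 1)) (x (q + 1)) ≤ dist (x p) (x q))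
    {p q : ℕ → ℕ}
    (h : ¬ IsBoundedUnder (· ≤ ·) atTop (fun n => dist (x (p n)) (x (q n)))) :
    limsup (fun n => dist (x (p n + 1)) (x (q n + 1))) atTop = 0 := by
  apply limsup_eq_zero_of_not_bounded
  rintro ⟨b, hb⟩
  apply h
  refine ⟨b + 2 * dist (x 1) (x 0), ?_⟩
  rw [Filter.eventually_map] at hb ⊢
  filter_upwards [hb] with n hn
  have t1 : dist (x (p n)) (x (q n)) ≤
      dist (x (p n)) (x (p n + 1)) + dist (x (p n + 1)) (x (q n + 1))
        + dist (x (q n + 1)) (x (q n)) := dist_triangle4 _ _ _ _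
  have g1 : dist (x (p n)) (x (p n + 1)) ≤ dist (x 1) (x 0) := by
    rw [dist_comm]; exact gap_le hmono (p n)
  have g2 : dist (x (q n + 1)) (x (q n)) ≤ dist (x 1) (x 0) := gap_le hmono (q n)
  linarith

/-- Under (iii), the consecutive gaps tend to zero. -/
theorem gaps_to_zero (hmono : ∀ p q : ℕ, dist (x (p + 1)) (x (q + 1)) ≤ dist (x p) (x q))
    (hC : PropC x) : Tendsto (fun j => dist (x (j + 1)) (x j)) atTop (nhds 0) := by
  set g : ℕ → ℝ := fun j => dist (x (j + 1)) (x j) with hg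
  have hanti : Antitone g := antitone_nat_of_succ_le fun n => hmono (n + 1) n
  have hbdd : BddBelow (Set.range g) := ⟨0, by rintro _ ⟨j, rfl⟩; exact dist_nonneg⟩
  have htend : Tendsto g atTop (nhds (⨅ j, g j)) := tendsto_atTop_ciInf hanti hbdd
  have hnonneg : (0:ℝ) ≤ ⨅ j, g j := le_ciInf fun j => dist_nonneg
  rcases eq_or_lt_of_le hnonneg with hzero | hpos
  · rwa [← hzero] at htend
  · exfalso
    obtain ⟨δ, hδ, η, hη, hηlt, N, hN⟩ := hC _ hpos
    have : ∀ᶠ j in atTop, g j < (⨅ j, g j) + δ :=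
      htend.eventually (eventually_lt_nhds (by linarith))
    obtain ⟨j, hjN, hj⟩ := ((eventually_ge_atTop N).and this).exists
    have h2 : g (j + 1) ≤ η := hN (j + 1) j (hjN.trans (Nat.le_succ j)) hjN hj
    have h3 : (⨅ j, g j) ≤ g (j + 1) := ciInf_le hbdd (j + 1)
    linarith

variable {X : Type*} [MetricSpace X] {x : ℕ → X}

theorem CtoB' (hmono : ∀ p q : ℕ, dist (x (p + 1)) (x (q + 1)) ≤ dist (x p) (x q))
    (hC : (∀ ε : ℝ, 0 < ε → ∃ δ : ℝ, 0 < δ ∧ ∃ η : ℝ, 0 < η ∧ η < ε ∧ ∃ N : ℕ,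
      ∀ p q : ℕ, N ≤ p → N ≤ q → dist (x p) (x q) < ε + δ → dist (x (p + 1)) (x (q + 1)) ≤ η))
    (ε : ℝ) (hε : 0 < ε) (p q : ℕ → ℕ) (hp : StrictMono p) (hq : StrictMono q)
    (hlim : limsup (fun n => dist (x (p n)) (x (q n))) atTop ≤ ε) :
    limsup (fun n => dist (x (p n + 1)) (x (q n + 1))) atTop < ε := by
  by_cases hbdd : IsBoundedUnder (· ≤ ·) atTop (fun n => dist (x (p n)) (x (q n)))
  · obtain ⟨δ, hδ, η, hη, hηlt, N, hN⟩ := hC ε hε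
    have h1 : ∀ᶠ n in atTop, dist (x (p n)) (x (q n)) < ε + δ :=
      eventually_lt_of_limsup_lt (lt_of_le_of_lt hlim (by linarith)) hbdd
    have h2 : ∀ᶠ n in atTop, dist (x (p n + 1)) (x (q n + 1)) ≤ η := by
      filter_upwards [h1, eventually_ge_atTop N] with n hn hnN
      exact hN (p n) (q n) (hnN.trans hp.le_apply) (hnN.trans hq.le_apply) hn
    have hcob : IsCoboundedUnder (· ≤ ·) atTop (fun n => dist (x (p n + 1)) (x (q n + 1))) :=
      (isBoundedUnder_of ⟨0, fun n => dist_nonneg⟩ :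
        IsBoundedUnder (· ≥ ·) atTop _).isCoboundedUnder_le
    exact lt_of_le_of_lt (limsup_le_of_le hcob h2) hηlt
  · rw [limsup_shift_junk hmono hbdd]; exact hε


set_option maxHeartbeats 1000000 in
theorem BtoC' (hmono : ∀ p q : ℕ, dist (x (p + 1)) (x (q + 1)) ≤ dist (x p) (x q))
    (hB : ∀ ε : ℝ, 0 < ε → ∀ p q : ℕ → ℕ, StrictMono p → StrictMono q →
      limsup (fun n => dist (x (p n)) (x (q n))) atTop ≤ ε →
      limsup (fun n => dist (x (p n + 1)) (x (q n + 1))) atTop < ε)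
    (ε : ℝ) (hε : 0 < ε) :
    ∃ δ : ℝ, 0 < δ ∧ ∃ η : ℝ, 0 < η ∧ η < ε ∧ ∃ N : ℕ,
      ∀ p q : ℕ, N ≤ p → N ≤ q → dist (x p) (x q) < ε + δ →
        dist (x (p + 1)) (x (q + 1)) ≤ η := by
  by_contra hcon
  push_neg at hcon
  have key : ∀ (k N : ℕ), ∃ a b : ℕ, N ≤ a ∧ N ≤ b ∧
      dist (x a) (x b) < ε + 1 / (k + 1) ∧
      ε * ((k + 1) / (k + 2)) < dist (x (a + 1)) (x (b + 1)) := by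
    intro k N
    have h1 : (0:ℝ) < 1 / ((k:ℝ) + 1) := by positivity
    have h2 : (0:ℝ) < ε * ((k + 1) / (k + 2)) := by positivity
    have h3 : ε * (((k:ℝ) + 1) / (k + 2)) < ε := by
      have : ((k:ℝ) + 1) / (k + 2) < 1 := by
        rw [div_lt_one (by positivity)]; linarith
      nlinarith
    obtain ⟨a, b, ha, hb, hd, hd'⟩ := hcon _ h1 _ h2 h3 N
    exact ⟨a, b, ha, hb, hd, hd'⟩
  choose A B hA hB' hd hd' using key
  set F : ℕ → ℕ × ℕ := fun k => Nat.rec (A 0 0, B 0 0)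
    (fun k ih => (A (k + 1) (max ih.1 ih.2 + 1), B (k + 1) (max ih.1 ih.2 + 1))) k with hF
  set P : ℕ → ℕ := fun k => (F k).1 with hPdef
  set Q : ℕ → ℕ := fun k => (F k).2 with hQdef
  have hPsucc : ∀ k, P (k + 1) = A (k + 1) (max (P k) (Q k) + 1) := fun k => rfl
  have hQsucc : ∀ k, Q (k + 1) = B (k + 1) (max (P k) (Q k) + 1) := fun k => rfl
  have hPmono : StrictMono P := by
    apply strictMono_nat_of_lt_succ
    intro n
    rw [hPsucc]
    calc P n < max (P n) (Q n) + 1 := Nat.lt_succ_of_le (le_max_left _ _)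
    _ ≤ A (n + 1) (max (P n) (Q n) + 1) := hA _ _
  have hQmono : StrictMono Q := by
    apply strictMono_nat_of_lt_succ
    intro n
    rw [hQsucc]
    calc Q n < max (P n) (Q n) + 1 := Nat.lt_succ_of_le (le_max_right _ _)
    _ ≤ B (n + 1) (max (P n) (Q n) + 1) := hB' _ _
  have hdk : ∀ k, dist (x (P k)) (x (Q k)) < ε + 1 / (k + 1) := by
    intro k; cases k with
    | zero => exact hd 0 0
    | succ n => exact hd (n + 1) (max (P n) (Q n) + 1)
  have hdk' : ∀ k, ε * ((k + 1) / (k + 2)) < dist (x (P k + 1)) (x (Q k + 1)) := by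
    intro k; cases k with
    | zero => exact hd' 0 0
    | succ n => exact hd' (n + 1) (max (P n) (Q n) + 1)
  -- limsup of the distances is ≤ ε
  have hbdd : IsBoundedUnder (· ≤ ·) atTop (fun k => dist (x (P k)) (x (Q k))) := by
    refine isBoundedUnder_of ⟨ε + 1, fun k => ?_⟩
    have := hdk k
    have h1 : 1 / ((k:ℝ) + 1) ≤ 1 := by
      rw [div_le_one (by positivity)]; linarith [Nat.cast_nonneg (α := ℝ) k]
    linarith
  have hcob : IsCoboundedUnder (· ≤ ·) atTop (fun k => dist (x (P k)) (x (Q k))) :=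
    (isBoundedUnder_of ⟨0, fun n => dist_nonneg⟩ :
      IsBoundedUnder (· ≥ ·) atTop _).isCoboundedUnder_le
  have htendbound : Tendsto (fun k : ℕ => ε + 1 / ((k:ℝ) + 1)) atTop (nhds ε) := by
    have := tendsto_one_div_add_atTop_nhds_zero_nat (𝕜 := ℝ)
    simpa using (tendsto_const_nhds (x := ε)).add this
  have hlimsup : limsup (fun k => dist (x (P k)) (x (Q k))) atTop ≤ ε := by
    have h1 : limsup (fun k => dist (x (P k)) (x (Q k))) atTop ≤
        limsup (fun k : ℕ => ε + 1 / ((k:ℝ) + 1)) atTop := by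
      refine limsup_le_limsup (Eventually.of_forall fun k => (hdk k).le) hcob ?_
      exact htendbound.isBoundedUnder_le
    rwa [htendbound.limsup_eq] at h1
  have hfinal := hB ε hε P Q hPmono hQmono hlimsup
  -- but limsup of shifted distances is ≥ ε
  have hinv : Tendsto (fun k : ℕ => (((k:ℝ) + 2))⁻¹) atTop (nhds 0) :=
    (tendsto_atTop_add_const_right _ 2 tendsto_natCast_atTop_atTop).inv_tendsto_atTop
  have h0 : Tendsto (fun k : ℕ => (((k:ℝ) + 1) / (k + 2))) atTop (nhds 1) := by
    have h1 : Tendsto (fun k : ℕ => 1 - (((k:ℝ) + 2))⁻¹) atTop (nhds 1) := by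
      simpa using (tendsto_const_nhds (x := (1:ℝ))).sub hinv
    refine Tendsto.congr (fun k => ?_) h1
    have hk2 : ((k:ℝ) + 2) ≠ 0 := by positivity
    field_simp
    ring
  have htendeta : Tendsto (fun k : ℕ => ε * (((k:ℝ) + 1) / (k + 2))) atTop (nhds ε) := by
    simpa using ((tendsto_const_nhds (x := ε)).mul h0)
  have hbdd' : IsBoundedUnder (· ≤ ·) atTop (fun k => dist (x (P k + 1)) (x (Q k + 1))) := by
    refine isBoundedUnder_of ⟨ε + 1, fun k => ?_⟩
    have h1 := hdk k
    have h2 : 1 / ((k:ℝ) + 1) ≤ 1 := by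
      rw [div_le_one (by positivity)]; linarith [Nat.cast_nonneg (α := ℝ) k]
    have h3 := hmono (P k) (Q k)
    linarith
  have hcobeta : IsCoboundedUnder (· ≤ ·) atTop (fun k : ℕ => ε * (((k:ℝ) + 1) / (k + 2))) :=
    (isBoundedUnder_of ⟨0, fun k => by positivity⟩ :
      IsBoundedUnder (· ≥ ·) atTop _).isCoboundedUnder_le
  have hge : limsup (fun k : ℕ => ε * (((k:ℝ) + 1) / (k + 2))) atTop ≤
      limsup (fun n => dist (x (P n + 1)) (x (Q n + 1))) atTop :=
    limsup_le_limsup (Eventually.of_forall fun k => (hdk' k).le) hcobeta hbdd'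
  rw [htendeta.limsup_eq] at hge
  linarith

set_option maxHeartbeats 1000000 in
theorem AtoB' (hmono : ∀ p q : ℕ, dist (x (p + 1)) (x (q + 1)) ≤ dist (x p) (x q))
    (hA : ∀ p q : ℕ → ℕ, StrictMono p → StrictMono q → (∀ n, x (p n) ≠ x (q n)) →
      Tendsto (fun n => dist (x (p n + 1)) (x (q n + 1)) / dist (x (p n)) (x (q n)))
        atTop (nhds 1) →
      Tendsto (fun n => dist (x (p n)) (x (q n))) atTop (nhds 0))
    (ε : ℝ) (hε : 0 < ε) (p q : ℕ → ℕ) (hp : StrictMono p) (hq : StrictMono q)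
    (hlim : limsup (fun n => dist (x (p n)) (x (q n))) atTop ≤ ε) :
    limsup (fun n => dist (x (p n + 1)) (x (q n + 1))) atTop < ε := by
  by_cases hbdd : IsBoundedUnder (· ≤ ·) atTop (fun n => dist (x (p n)) (x (q n)))
  swap
  · rw [limsup_shift_junk hmono hbdd]; exact hε
  by_contra hcon
  push_neg at hcon
  have hcob' : IsCoboundedUnder (· ≤ ·) atTop (fun n => dist (x (p n + 1)) (x (q n + 1))) :=
    (isBoundedUnder_of ⟨0, fun n => dist_nonneg⟩ :
      IsBoundedUnder (· ≥ ·) atTop _).isCoboundedUnder_le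
  have hfreq : ∀ k : ℕ, ∃ᶠ n in atTop,
      ε - 1 / ((k:ℝ) + 1) < dist (x (p n + 1)) (x (q n + 1)) ∧
      dist (x (p n)) (x (q n)) < ε + 1 / ((k:ℝ) + 1) := by
    intro k
    have hk : (0:ℝ) < 1 / ((k:ℝ) + 1) := by positivity
    have e1 : ∃ᶠ n in atTop, ε - 1 / ((k:ℝ) + 1) < dist (x (p n + 1)) (x (q n + 1)) :=
      frequently_lt_of_lt_limsup hcob' (lt_of_lt_of_le (by linarith) hcon)
    have e2 : ∀ᶠ n in atTop, dist (x (p n)) (x (q n)) < ε + 1 / ((k:ℝ) + 1) :=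
      eventually_lt_of_limsup_lt (lt_of_le_of_lt hlim (by linarith)) hbdd
    exact e1.and_eventually e2
  obtain ⟨φ, hφ, hφP⟩ := extraction_forall_of_frequently hfreq
  obtain ⟨k₀, hk₀⟩ := exists_nat_one_div_lt hε
  set θ : ℕ → ℕ := fun j => φ (k₀ + j) with hθdef
  have hθ : StrictMono θ := fun a b h => hφ (by omega)
  have hbound : ∀ j : ℕ, 1 / (((k₀ + j : ℕ):ℝ) + 1) ≤ 1 / ((k₀:ℝ) + 1) := by
    intro j
    apply one_div_le_one_div_of_le (by positivity)
    push_cast; linarith [Nat.cast_nonneg (α := ℝ) j]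
  have hpos : ∀ j, 0 < dist (x (p (θ j))) (x (q (θ j))) := by
    intro j
    have h1 := (hφP (k₀ + j)).1
    have h2 := hmono (p (θ j)) (q (θ j))
    have h3 := hbound j
    calc (0:ℝ) < ε - 1 / ((k₀:ℝ) + 1) := by linarith
    _ ≤ ε - 1 / (((k₀ + j : ℕ):ℝ) + 1) := by linarith
    _ < dist (x (p (θ j) + 1)) (x (q (θ j) + 1)) := h1
    _ ≤ _ := h2
  have hne : ∀ j, x (p (θ j)) ≠ x (q (θ j)) := fun j => dist_pos.mp (hpos j)
  have hbtend : Tendsto (fun j : ℕ => 1 / (((k₀ + j : ℕ):ℝ) + 1)) atTop (nhds 0) := by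
    have h1 : Tendsto (fun n : ℕ => 1 / ((n:ℝ) + 1)) atTop (nhds 0) :=
      tendsto_one_div_add_atTop_nhds_zero_nat
    have h2 : Tendsto (fun j : ℕ => k₀ + j) atTop atTop := by
      simpa [Nat.add_comm] using tendsto_add_atTop_nat k₀
    exact h1.comp h2
  have hlower : Tendsto (fun j : ℕ => ε - 1 / (((k₀ + j : ℕ):ℝ) + 1)) atTop (nhds ε) := by
    simpa using (tendsto_const_nhds (x := ε)).sub hbtend
  have hupper : Tendsto (fun j : ℕ => ε + 1 / (((k₀ + j : ℕ):ℝ) + 1)) atTop (nhds ε) := by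
    simpa using (tendsto_const_nhds (x := ε)).add hbtend
  have hd : Tendsto (fun j => dist (x (p (θ j))) (x (q (θ j)))) atTop (nhds ε) := by
    refine tendsto_of_tendsto_of_tendsto_of_le_of_le' hlower hupper ?_ ?_
    · filter_upwards with j
      exact le_trans (le_of_lt (hφP (k₀ + j)).1) (hmono _ _)
    · filter_upwards with j
      exact le_of_lt (hφP (k₀ + j)).2
  have hd' : Tendsto (fun j => dist (x (p (θ j) + 1)) (x (q (θ j) + 1))) atTop (nhds ε) := by
    refine tendsto_of_tendsto_of_tendsto_of_le_of_le' hlower hupper ?_ ?_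
    · filter_upwards with j
      exact le_of_lt (hφP (k₀ + j)).1
    · filter_upwards with j
      exact le_trans (hmono _ _) (le_of_lt (hφP (k₀ + j)).2)
  have hratio : Tendsto
      (fun j => dist (x (p (θ j) + 1)) (x (q (θ j) + 1)) / dist (x (p (θ j))) (x (q (θ j))))
      atTop (nhds 1) := by
    have := hd'.div hd (ne_of_gt hε)
    rwa [div_self (ne_of_gt hε)] at this
  have hzero := hA (p ∘ θ) (q ∘ θ) (hp.comp hθ) (hq.comp hθ) hne hratio
  exact absurd (tendsto_nhds_unique hd hzero) (ne_of_gt hε)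

set_option maxHeartbeats 1000000 in
theorem CtoA' (hmono : ∀ p q : ℕ, dist (x (p + 1)) (x (q + 1)) ≤ dist (x p) (x q))
    (hC : ∀ ε : ℝ, 0 < ε → ∃ δ : ℝ, 0 < δ ∧ ∃ η : ℝ, 0 < η ∧ η < ε ∧ ∃ N : ℕ,
      ∀ p q : ℕ, N ≤ p → N ≤ q → dist (x p) (x q) < ε + δ → dist (x (p + 1)) (x (q + 1)) ≤ η)
    (p q : ℕ → ℕ) (hp : StrictMono p) (hq : StrictMono q) (hne : ∀ n, x (p n) ≠ x (q n))
    (hrat : Tendsto (fun n => dist (x (p n + 1)) (x (q n + 1)) / dist (x (p n)) (x (q n)))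
      atTop (nhds 1)) :
    Tendsto (fun n => dist (x (p n)) (x (q n))) atTop (nhds 0) := by
  classical
  by_contra hnot
  -- extract ε₀ > 0 and a subsequence along which the distance is ≥ ε₀
  have hex : ∃ ε₀ : ℝ, 0 < ε₀ ∧ ∃ᶠ n in atTop, ε₀ ≤ dist (x (p n)) (x (q n)) := by
    by_contra h
    push_neg at h
    apply hnot
    rw [Metric.tendsto_atTop]
    intro ε hε
    have h2 : ∀ᶠ n in atTop, ¬ ε ≤ dist (x (p n)) (x (q n)) := by
      have := h ε hε
      exact this.mono fun n hn => not_le.mpr hn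
    obtain ⟨N, hN⟩ := eventually_atTop.mp h2
    refine ⟨N, fun n hn => ?_⟩
    rw [Real.dist_0_eq_abs, abs_of_nonneg dist_nonneg]
    exact lt_of_not_ge (hN n hn)
  obtain ⟨ε₀, hε₀, hfreq⟩ := hex
  obtain ⟨φ, hφ, hφP⟩ := extraction_of_frequently_atTop hfreq
  obtain ⟨δ₁, hδ₁, η₁, hη₁, hη₁lt, N₁, hN₁⟩ := hC 1 one_pos
  by_cases hP : ∀ K : ℕ, ∃ k, K ≤ k ∧ 1 + δ₁ < dist (x (p (φ k))) (x (q (φ k)))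
  · -- distances unbounded along the subsequence: contradiction via small gaps
    have hgaps := gaps_to_zero hmono hC
    have hminpos : (0:ℝ) < min δ₁ ((1 - η₁) / 2) := lt_min hδ₁ (by linarith)
    obtain ⟨J', hJ'⟩ := eventually_atTop.mp
      (hgaps.eventually (eventually_lt_nhds hminpos))
    set J : ℕ := max J' N₁ with hJdef
    obtain ⟨k, hkJ, hk⟩ := hP J
    set n₀ := φ k with hn₀
    have hpqne : p n₀ ≠ q n₀ := fun h => hne n₀ (by rw [h])
    set a : ℕ := max (p n₀) (q n₀) with ha
    set b : ℕ := min (p n₀) (q n₀) with hb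
    have hab : dist (x a) (x b) = dist (x (p n₀)) (x (q n₀)) := by
      rcases le_total (p n₀) (q n₀) with h | h
      · rw [ha, hb, max_eq_right h, min_eq_left h, dist_comm]
      · rw [ha, hb, max_eq_left h, min_eq_right h]
    have hba : b < a := min_lt_max.mpr hpqne
    have hJb : J ≤ b := by
      have h1 : J ≤ n₀ := hkJ.trans hφ.le_apply
      exact le_min (h1.trans hp.le_apply) (h1.trans hq.le_apply)
    have hexm : ∃ m, b < m ∧ m ≤ a ∧ 1 ≤ dist (x m) (x b) := by
      refine ⟨a, hba, le_refl a, ?_⟩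
      rw [hab]; linarith
    set m := Nat.find hexm with hmdef
    obtain ⟨hmb, hma, hm1⟩ := Nat.find_spec hexm
    have hprev : dist (x (m - 1)) (x b) < 1 := by
      rcases eq_or_lt_of_le (Nat.le_sub_one_of_lt hmb) with h | h
      · rw [← h]; simpa using zero_lt_one
      · have hmin := Nat.find_min hexm (show m - 1 < m by omega)
        push_neg at hmin
        exact lt_of_not_ge fun hcontra =>
          absurd (hmin h (le_trans (Nat.sub_le m 1) hma)) (not_lt.mpr hcontra)
    have hm1eq : m - 1 + 1 = m := by omega
    have hJm1 : J' ≤ m - 1 := by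
      have : J' ≤ b := (le_max_left J' N₁).trans hJb
      omega
    have hgapm1 : dist (x (m - 1 + 1)) (x (m - 1)) < min δ₁ ((1 - η₁) / 2) := hJ' _ hJm1
    have hd1 : dist (x m) (x b) < 1 + δ₁ := by
      have htri : dist (x m) (x b) ≤ dist (x m) (x (m - 1)) + dist (x (m - 1)) (x b) :=
        dist_triangle _ _ _
      have hg : dist (x m) (x (m - 1)) < δ₁ := by
        rw [← hm1eq, dist_comm] at *
        exact lt_of_lt_of_le hgapm1 (min_le_left _ _)
      linarith
    have hNm : N₁ ≤ m := le_trans (le_trans (le_max_right J' N₁) hJb) (le_of_lt hmb)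
    have hNb : N₁ ≤ b := (le_max_right J' N₁).trans hJb
    have hstep : dist (x (m + 1)) (x (b + 1)) ≤ η₁ := hN₁ m b hNm hNb hd1
    have hgapm : dist (x (m + 1)) (x m) < (1 - η₁) / 2 := by
      have : J' ≤ m := by omega
      exact lt_of_lt_of_le (hJ' m this) (min_le_right _ _)
    have hgapb : dist (x (b + 1)) (x b) < (1 - η₁) / 2 := by
      have : J' ≤ b := (le_max_left J' N₁).trans hJb
      exact lt_of_lt_of_le (hJ' b this) (min_le_right _ _)
    have htri2 : dist (x m) (x b) ≤
        dist (x m) (x (m + 1)) + dist (x (m + 1)) (x (b + 1)) + dist (x (b + 1)) (x b) :=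
      dist_triangle4 _ _ _ _
    rw [dist_comm (x m) (x (m + 1))] at htri2
    linarith
  · -- distances bounded along the subsequence: Bolzano–Weierstrass
    push_neg at hP
    obtain ⟨K, hK⟩ := hP
    set u : ℕ → ℝ := fun j => dist (x (p (φ (K + j)))) (x (q (φ (K + j)))) with hu
    have humem : ∀ j, u j ∈ Set.Icc ε₀ (1 + δ₁) :=
      fun j => ⟨hφP (K + j), hK _ (Nat.le_add_right K j)⟩
    obtain ⟨L, hLmem, ψ, hψ, hutend⟩ :=
      tendsto_subseq_of_bounded (Metric.isBounded_Icc ε₀ (1 + δ₁)) humem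
    rw [closure_Icc] at hLmem
    have hL : 0 < L := lt_of_lt_of_le hε₀ hLmem.1
    obtain ⟨δ, hδ, η, hη, hηlt, N, hN⟩ := hC L hL
    set θ : ℕ → ℕ := fun j => φ (K + ψ j) with hθ
    have hθmono : StrictMono θ := fun i j h => hφ (Nat.add_lt_add_left (hψ h) K)
    have hdtend : Tendsto (fun j => dist (x (p (θ j))) (x (q (θ j)))) atTop (nhds L) := hutend
    have hdpos : ∀ j, 0 < dist (x (p (θ j))) (x (q (θ j))) :=
      fun j => lt_of_lt_of_le hε₀ (hφP (K + ψ j))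
    have hevD : ∀ᶠ j in atTop, dist (x (p (θ j) + 1)) (x (q (θ j) + 1)) ≤ η := by
      have hev1 : ∀ᶠ j in atTop, dist (x (p (θ j))) (x (q (θ j))) < L + δ :=
        hdtend.eventually (eventually_lt_nhds (by linarith))
      filter_upwards [hev1, eventually_ge_atTop N] with j hj hjN
      have h1 : N ≤ θ j := by
        calc N ≤ j := hjN
        _ ≤ ψ j := hψ.le_apply
        _ ≤ K + ψ j := Nat.le_add_left _ _
        _ ≤ φ (K + ψ j) := hφ.le_apply
      exact hN _ _ (h1.trans hp.le_apply) (h1.trans hq.le_apply) hj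
    have hrat' : Tendsto
        (fun j => dist (x (p (θ j) + 1)) (x (q (θ j) + 1)) / dist (x (p (θ j))) (x (q (θ j))))
        atTop (nhds 1) := hrat.comp hθmono.tendsto_atTop
    have hquot : Tendsto (fun j => η / dist (x (p (θ j))) (x (q (θ j)))) atTop
        (nhds (η / L)) := tendsto_const_nhds.div hdtend (ne_of_gt hL)
    have hle : ∀ᶠ j in atTop,
        dist (x (p (θ j) + 1)) (x (q (θ j) + 1)) / dist (x (p (θ j))) (x (q (θ j))) ≤
          η / dist (x (p (θ j))) (x (q (θ j))) := by
      filter_upwards [hevD] with j hj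
      exact (div_le_div_iff_of_pos_right (hdpos j)).mpr hj
    have hfin : (1:ℝ) ≤ η / L := le_of_tendsto_of_tendsto hrat' hquot hle
    rw [le_div_iff₀ hL] at hfin
    linarith
end Stmt12Aux

/-- Proposition 3.11: equivalent formulations of Geraghty's condition. -/
theorem stmt12 {X : Type*} [MetricSpace X] (x : ℕ → X)
    (hmono : ∀ p q : ℕ, dist (x (p + 1)) (x (q + 1)) ≤ dist (x p) (x q)) :
    ((∀ p q : ℕ → ℕ, StrictMono p → StrictMono q → (∀ n, x (p n) ≠ x (q n)) →
        Tendsto (fun n => dist (x (p n + 1)) (x (q n + 1)) / dist (x (p n)) (x (q n)))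
          atTop (nhds 1) →
        Tendsto (fun n => dist (x (p n)) (x (q n))) atTop (nhds 0)) ↔
      (∀ ε : ℝ, 0 < ε → ∀ p q : ℕ → ℕ, StrictMono p → StrictMono q →
        limsup (fun n => dist (x (p n)) (x (q n))) atTop ≤ ε →
        limsup (fun n => dist (x (p n + 1)) (x (q n + 1))) atTop < ε)) ∧
    ((∀ ε : ℝ, 0 < ε → ∀ p q : ℕ → ℕ, StrictMono p → StrictMono q →
        limsup (fun n => dist (x (p n)) (x (q n))) atTop ≤ ε →
        limsup (fun n => dist (x (p n + 1)) (x (q n + 1))) atTop < ε) ↔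
      (∀ ε : ℝ, 0 < ε → ∃ δ : ℝ, 0 < δ ∧ ∃ η : ℝ, 0 < η ∧ η < ε ∧ ∃ N : ℕ,
        ∀ p q : ℕ, N ≤ p → N ≤ q → dist (x p) (x q) < ε + δ →
          dist (x (p + 1)) (x (q + 1)) ≤ η)) := by
  refine ⟨⟨fun h => Stmt12Aux.AtoB' hmono h, fun h => ?_⟩,
    fun h => Stmt12Aux.BtoC' hmono h, fun h => Stmt12Aux.CtoB' hmono h⟩
  exact Stmt12Aux.CtoA' hmono (fun ε hε => Stmt12Aux.BtoC' hmono h ε hε)
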